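/- Let C be a category and F : C ⥤ Type u a functor. Then the commutative square in the category Cat of categories whose top arrow is the functor F.Elements ⥤ Pointed sending an object (c, x) to the pointed type (F(c), x) and a morphism g to the point-preserving map F(g), whose left vertical arrow is the canonical projection F.Elements ⥤ C, whose right vertical arrow is the forgetful functor Pointed ⥤ Type u, and whose bottom arrow is F regarded as a functor into the category of types, is a pullback square. (This is the statement that the forgetful functor from pointed objects is the universal fibration, i.e. that the universal left fibration is the forgetful map from pointed spaces to spaces, in the 1-categorical case.) -/

import Mathlib

open CategoryTheory

universe u

/-- For a functor `F : C ⥤ Type u`, the functor `F.Elements ⥤ Pointed` sending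
`(c, x)` to the pointed type `(F c, x)` and a morphism `g` to the point-preserving
map `F.map g`. -/
@[simps]
def elementsToPointed {C : Type (u + 1)} [Category.{u} C] (F : C ⥤ Type u) :
    F.Elements ⥤ Pointed.{u} where
  obj p := ⟨F.obj p.1, p.2⟩
  map g := ⟨F.map g.1, g.2⟩

private lemma tyEqToHom {α β : Type u} (e : α = β) (x : α) :
    (eqToHom e : α ⟶ β) x = cast e x := by cases e; rfl

section lift
variable {C : Type (u + 1)} [Category.{u} C] (F : C ⥤ Type u)
  {W : Type (u+1)} [Category.{u} W] (fst : W ⥤ Pointed.{u}) (snd : W ⥤ C)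

private lemma eObj (h : fst ⋙ forget Pointed.{u} = snd ⋙ F) (X : W) : (fst.obj X).X = F.obj (snd.obj X) :=
  Functor.congr_obj h X

private lemma ePt (h : fst ⋙ forget Pointed.{u} = snd ⋙ F) {X Y : W} (f : X ⟶ Y) :
    F.map (snd.map f) (cast (eObj F fst snd h X) (fst.obj X).point)
      = cast (eObj F fst snd h Y) (fst.obj Y).point := by
  have hf := Functor.congr_hom h.symm f
  simp only [Functor.comp_map] at hf
  have : ∀ x, F.map (snd.map f) x =
      (eqToHom (eObj F fst snd h X).symm ≫ TypeCat.ofHom (fst.map f).toFun ≫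
        eqToHom (eObj F fst snd h Y)) x := fun x => by
    rw [hf]
  rw [this]
  simp only [types_comp_apply, tyEqToHom, cast_cast, cast_eq]
  rw [TypeCat.ofHom_apply, (fst.map f).map_point]

/-- The lift functor. -/
def liftFunctor (h : fst ⋙ forget Pointed.{u} = snd ⋙ F) : W ⥤ F.Elements where
  obj X := ⟨snd.obj X, cast (eObj F fst snd h X) (fst.obj X).point⟩
  map {X Y} f := ⟨snd.map f, ePt F fst snd h f⟩
  map_id X := by apply CategoryOfElements.ext; simp; rfl
  map_comp f g := by apply CategoryOfElements.ext; simp; rfl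

end lift

private lemma pointedEq (p : Pointed.{u}) (α : Type u) (e : p.X = α) :
    (⟨α, cast e p.point⟩ : Pointed.{u}) = p := by
  cases p; subst e; rfl

private lemma elements_eqToHom_val {C : Type (u + 1)} [Category.{u} C] {F : C ⥤ Type u}
    {x y : F.Elements} (h : x = y) :
    (eqToHom h : x ⟶ y).val = eqToHom (congrArg Sigma.fst h) := by
  subst h; rfl

private lemma comm' {C : Type (u + 1)} [Category.{u} C] (F : C ⥤ Type u) :
    elementsToPointed F ⋙ forget Pointed.{u} = CategoryOfElements.π F ⋙ F := rfl

/-- The square in `Cat` whose top arrow is `(c, x) ↦ (F c, x)`, whose left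
vertical arrow is the projection `F.Elements ⥤ C`, whose right vertical arrow is
the forgetful functor `Pointed ⥤ Type u`, and whose bottom arrow is `F`, is a
pullback square: the forgetful functor from pointed types is the universal left
fibration (in the 1-categorical case). -/
theorem elements_pointed_isPullback {C : Type (u + 1)} [Category.{u} C]
    (F : C ⥤ Type u) :
    IsPullback
      (P := Cat.of F.Elements) (X := Cat.of Pointed.{u}) (Y := Cat.of C)
      (Z := Cat.of (Type u))
      ((elementsToPointed F).toCatHom : Cat.of F.Elements ⟶ Cat.of Pointed.{u})
      ((CategoryOfElements.π F).toCatHom : Cat.of F.Elements ⟶ Cat.of C)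
      ((forget Pointed.{u}).toCatHom : Cat.of Pointed.{u} ⟶ Cat.of (Type u))
      (F.toCatHom : Cat.of C ⟶ Cat.of (Type u)) := by
  refine IsPullback.of_isLimit' ⟨rfl⟩ ?_
  refine Limits.PullbackCone.IsLimit.mk _
    (fun s => (liftFunctor F s.fst.toFunctor s.snd.toFunctor
      (by exact congrArg Cat.Hom.toFunctor s.condition)).toCatHom) ?_ ?_ ?_
  · intro s
    apply Cat.ext
    change _ ⋙ _ = _
    refine CategoryTheory.Functor.ext (fun X => pointedEq _ _ _) (fun X Y f => ?_)
    refine (forget Pointed.{u}).map_injective ?_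
    erw [Functor.map_comp, Functor.map_comp, eqToHom_map, eqToHom_map]
    have := Functor.congr_hom (congrArg Cat.Hom.toFunctor s.condition).symm f
    simp only [Functor.comp_map] at this ⊢
    exact this
  · intro s
    apply Cat.ext
    change _ ⋙ _ = _
    exact CategoryTheory.Functor.ext (fun X => rfl) (fun X Y f => by erw [eqToHom_refl, eqToHom_refl, Category.id_comp, Category.comp_id]; rfl)
  · intro s m hfst hsnd
    replace hfst := congrArg Cat.Hom.toFunctor hfst
    replace hsnd := congrArg Cat.Hom.toFunctor hsnd
    rw [Cat.comp_eq_comp] at hfst hsnd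
    apply Cat.ext
    refine CategoryTheory.Functor.ext (fun X => ?_) (fun X Y f => ?_)
    · refine Functor.Elements.ext _ _ (Functor.congr_obj hsnd X) ?_
      have hpt : HEq ((elementsToPointed F).obj (m.toFunctor.obj X)).point (s.fst.toFunctor.obj X).point :=
        congr_arg_heq Pointed.point (Functor.congr_obj hfst X)
      erw [eqToHom_map F, tyEqToHom]
      apply eq_of_heq
      exact ((cast_heq _ _).trans hpt).trans (cast_heq _ _).symm
    · apply CategoryOfElements.ext
      erw [CategoryOfElements.comp_val, CategoryOfElements.comp_val,
        elements_eqToHom_val, elements_eqToHom_val]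
      have := Functor.congr_hom hsnd f
      simp only [Functor.comp_map] at this
      exact this
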